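/- Let p be an odd prime, n ≥ 1, q = p^(2^n), and G = PGL₂(F_q). Fix an involution x ∈ G not lying in the image of SL₂(F_q) in G. Then every subgroup H of G with H ≅ dihedral of order 2(q−1) and x ∈ H contains exactly one Klein four-subgroup containing x. -/

import Mathlib

open Matrix

/-- `PGL₂(F)`: the projective general linear group, i.e. the quotient of `GL₂(F)`
by its center. -/
abbrev ProjectiveGL2 (F : Type) [Field F] : Type :=
  Matrix.GeneralLinearGroup (Fin 2) F ⧸ Subgroup.center (Matrix.GeneralLinearGroup (Fin 2) F)

/-- The image of the natural map `SL₂(F) → PGL₂(F)`: the socle of `PGL₂(F)`,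
isomorphic to `PSL₂(F)`. -/
def socleSL2 (F : Type) [Field F] : Subgroup (ProjectiveGL2 F) :=
  ((QuotientGroup.mk' (Subgroup.center (Matrix.GeneralLinearGroup (Fin 2) F))).comp
    Matrix.SpecialLinearGroup.toGL).range

lemma sq_mem_socle (F : Type) [Field F] (g : ProjectiveGL2 F) : g ^ 2 ∈ socleSL2 F := by
  obtain ⟨A, rfl⟩ := QuotientGroup.mk_surjective g
  set d : Fˣ := Matrix.GeneralLinearGroup.det A with hd
  have hdet : (↑(A ^ 2) : Matrix (Fin 2) (Fin 2) F).det = (d : F) ^ 2 := by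
    simp [hd, pow_two, Matrix.GeneralLinearGroup.det]
  set S : Matrix.SpecialLinearGroup (Fin 2) F :=
    ⟨((d⁻¹ : Fˣ) : F) • (↑(A ^ 2) : Matrix (Fin 2) (Fin 2) F), by
      rw [Matrix.det_smul, hdet]
      simp [Fintype.card_fin]⟩ with hS
  refine ⟨S, ?_⟩
  have hGL : (A ^ 2) = (d • (1 : GL (Fin 2) F)) * Matrix.SpecialLinearGroup.toGL S := by
    ext
    simp [hS, Units.smul_def, Matrix.SpecialLinearGroup.toGL, smul_smul]
  have hcen : (d • (1 : GL (Fin 2) F)) ∈ Subgroup.center (GL (Fin 2) F) := by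
    rw [Subgroup.mem_center_iff]
    intro g
    ext
    simp [Units.smul_def, mul_smul_comm, smul_mul_assoc]
  show QuotientGroup.mk (Matrix.SpecialLinearGroup.toGL S) = QuotientGroup.mk A ^ 2
  rw [← QuotientGroup.mk_pow, hGL, QuotientGroup.mk_mul,
    (QuotientGroup.eq_one_iff _).mpr hcen, one_mul]

section Dihedral

open DihedralGroup Subgroup

lemma zmod_two_torsion {m : ℕ} (hm2 : 2 ∣ m) (hm : 2 ≤ m) (j : ZMod m) :
    j + j = 0 ↔ j = 0 ∨ j = ((m / 2 : ℕ) : ZMod m) := by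
  haveI : NeZero m := ⟨by omega⟩
  constructor
  · intro h
    have hv : ((j.val + j.val : ℕ) : ZMod m) = 0 := by
      push_cast [ZMod.natCast_val, ZMod.cast_id]; exact h
    rw [ZMod.natCast_eq_zero_iff] at hv
    have hlt : j.val < m := ZMod.val_lt j
    have : j.val + j.val = 0 ∨ j.val + j.val = m := by
      rcases hv with ⟨c, hc⟩
      have hclt : c < 2 := by nlinarith
      interval_cases c <;> omega
    rcases this with h0 | h1
    · left
      have : j.val = 0 := by omega
      rw [← ZMod.natCast_zmod_val (a := j), this, Nat.cast_zero]
    · right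
      have : j.val = m / 2 := by omega
      rw [← ZMod.natCast_zmod_val (a := j), this]
  · rintro (rfl | rfl)
    · simp
    · rw [← Nat.cast_add]
      have : m / 2 + m / 2 = m := by omega
      rw [this, ZMod.natCast_self]

lemma centralizer_sr_coe {m : ℕ} (hm2 : 2 ∣ m) (hm : 2 ≤ m) (i : ZMod m) :
    (centralizer {sr i} : Set (DihedralGroup m)) =
      {r 0, r ((m / 2 : ℕ) : ZMod m), sr i, sr (i + ((m / 2 : ℕ) : ZMod m))} := by
  ext g
  rw [SetLike.mem_coe, mem_centralizer_singleton_iff]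
  cases g with
  | r j =>
    simp only [sr_mul_r, r_mul_sr, sr.injEq, Set.mem_insert_iff, Set.mem_singleton_iff,
      r.injEq, reduceCtorEq, or_false]
    rw [show (i - j = i + j ↔ j + j = 0) from
      ⟨fun h => by linear_combination -h, fun h => by linear_combination -h⟩,
      zmod_two_torsion hm2 hm]
  | sr j =>
    simp only [sr_mul_sr, r_mul_sr, r.injEq, Set.mem_insert_iff, Set.mem_singleton_iff,
      sr.injEq, reduceCtorEq, false_or]
    rw [show (i - j = j - i ↔ (j - i) + (j - i) = 0) from
      ⟨fun h => by linear_combination -h, fun h => by linear_combination -h⟩,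
      zmod_two_torsion hm2 hm]
    constructor
    · rintro (h | h)
      · left; linear_combination h
      · right; linear_combination h
    · rintro (rfl | rfl)
      · left; ring
      · right; ring

lemma half_ne_zero {m : ℕ} (hm2 : 2 ∣ m) (hm : 2 ≤ m) :
    ((m / 2 : ℕ) : ZMod m) ≠ 0 := by
  haveI : NeZero m := ⟨by omega⟩
  rw [Ne, ZMod.natCast_eq_zero_iff]
  intro h
  have := Nat.le_of_dvd (by omega) h
  omega

lemma card_centralizer_sr {m : ℕ} (hm2 : 2 ∣ m) (hm : 2 ≤ m) (i : ZMod m) :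
    Nat.card (centralizer {sr i} : Subgroup (DihedralGroup m)) = 4 := by
  have h0 := half_ne_zero hm2 hm
  rw [← SetLike.coe_sort_coe, Nat.card_coe_set_eq, centralizer_sr_coe hm2 hm i]
  rw [show ({r 0, r ((m / 2 : ℕ) : ZMod m), sr i, sr (i + ((m / 2 : ℕ) : ZMod m))} :
      Set (DihedralGroup m)) =
      (↑({r 0, r ((m / 2 : ℕ) : ZMod m), sr i, sr (i + ((m / 2 : ℕ) : ZMod m))} :
        Finset (DihedralGroup m)) : Set (DihedralGroup m)) by simp]
  rw [Set.ncard_coe_finset]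
  rw [Finset.card_insert_of_notMem (by simp [Ne.symm h0, -r_zero]),
    Finset.card_insert_of_notMem (by simp),
    Finset.card_insert_of_notMem (by simpa using h0)]
  simp

lemma exponent_centralizer_sr {m : ℕ} (hm2 : 2 ∣ m) (hm : 2 ≤ m) (i : ZMod m) :
    Monoid.exponent (centralizer {sr i} : Subgroup (DihedralGroup m)) = 2 := by
  haveI : NeZero m := ⟨by omega⟩
  have hsq : ∀ g : (centralizer {sr i} : Subgroup (DihedralGroup m)), g ^ 2 = 1 := by
    rintro ⟨g, hg⟩
    have : g ∈ (centralizer {sr i} : Set (DihedralGroup m)) := hg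
    rw [centralizer_sr_coe hm2 hm i] at this
    ext
    show g ^ 2 = 1
    rcases this with rfl | rfl | rfl | rfl
    · simp [pow_two, one_def, -r_zero]
    · rw [pow_two, r_mul_r, ← Nat.cast_add, show m / 2 + m / 2 = m by omega,
        ZMod.natCast_self, one_def]
    · simp [pow_two, one_def, -r_zero]
    · simp [pow_two, one_def, -r_zero]
  have hdvd : Monoid.exponent (centralizer {sr i} : Subgroup (DihedralGroup m)) ∣ 2 :=
    Monoid.exponent_dvd_of_forall_pow_eq_one hsq
  have hne : Monoid.exponent (centralizer {sr i} : Subgroup (DihedralGroup m)) ≠ 1 := by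
    intro h
    have h1 := Monoid.pow_exponent_eq_one
      (⟨sr i, by rw [← SetLike.mem_coe, centralizer_sr_coe hm2 hm i]; simp⟩ :
        (centralizer {sr i} : Subgroup (DihedralGroup m)))
    rw [h, pow_one] at h1
    have := congrArg Subtype.val h1
    simp [one_def, -r_zero] at this
  rcases (Nat.prime_two.eq_one_or_self_of_dvd _ hdvd) with h | h
  · exact absurd h hne
  · exact h

lemma dihedral_inv_sq (m : ℕ) (hm4 : 4 ∣ m) (hm : 2 ≤ m) (a : DihedralGroup m)
    (h2 : a ^ 2 = 1) (h1 : a ≠ 1) (hsq : ¬ IsSquare a) : ∃ i : ZMod m, a = sr i := by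
  haveI : NeZero m := ⟨by omega⟩
  cases a with
  | r j =>
    exfalso
    rw [pow_two, r_mul_r, one_def, r.injEq] at h2
    have hj : j = 0 ∨ j = ((m / 2 : ℕ) : ZMod m) := by
      rw [← zmod_two_torsion ⟨m / 2, by omega⟩ hm]; exact h2
    rcases hj with rfl | rfl
    · exact h1 (one_def.symm)
    · exact hsq ⟨r ((m / 4 : ℕ) : ZMod m), by
        rw [r_mul_r, ← Nat.cast_add, show m / 4 + m / 4 = m / 2 by omega]⟩
  | sr j => exact ⟨j, rfl⟩

end Dihedral

/-- Each dihedral subgroup of `PGL₂(q)` of order `2(q-1)` containing an outer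
involution `x` contains exactly one Klein four-subgroup containing `x`. -/
theorem unique_klein_four_in_dihedral (p n : ℕ) (hp : Nat.Prime p) (hodd : Odd p) (hn : 1 ≤ n)
    (F : Type) [Field F] [Fintype F] (hF : Fintype.card F = p ^ 2 ^ n)
    (x : ProjectiveGL2 F) (hx : orderOf x = 2) (hxS : x ∉ socleSL2 F)
    (H : Subgroup (ProjectiveGL2 F))
    (hH : Nonempty (H ≃* DihedralGroup (p ^ 2 ^ n - 1))) (hxH : x ∈ H) :
    ∃! V : Subgroup (ProjectiveGL2 F), V ≤ H ∧ IsKleinFour ↥V ∧ x ∈ V := by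
  classical
  obtain ⟨e⟩ := hH
  set m : ℕ := p ^ 2 ^ n - 1 with hm_def
  -- arithmetic: 4 ∣ m and 2 ≤ m
  have hp3 : 3 ≤ p := by
    rcases hp.two_le.lt_or_eq with h | h
    · omega
    · exfalso; rw [← h] at hodd; exact (Nat.not_odd_iff_even.mpr (by norm_num)) hodd
  have h2n : 2 ^ n = 2 ^ (n - 1) * 2 := by
    rw [← pow_succ]
    congr 1
    omega
  set k : ℕ := p ^ 2 ^ (n - 1) with hk_def
  have hq : p ^ 2 ^ n = k ^ 2 := by rw [h2n, pow_mul]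
  have hkodd : Odd k := hodd.pow
  have hk3 : 3 ≤ k := le_trans hp3 (Nat.le_self_pow (Nat.pos_of_ne_zero (by positivity)).ne' p)
  obtain ⟨t, ht⟩ := hkodd
  have hksq : k ^ 2 = 4 * (t * t + t) + 1 := by rw [ht]; ring
  have hm4 : 4 ∣ m := ⟨t * t + t, by omega⟩
  have hm2' : 2 ∣ m := dvd_trans (by norm_num) hm4
  have hm2 : 2 ≤ m := by
    have htt : 1 ≤ t := by omega
    have h1 : 1 ≤ t * t := Nat.one_le_iff_ne_zero.mpr (by positivity)
    omega
  -- set up the elements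
  set xH : H := ⟨x, hxH⟩ with hxH_def
  set a : DihedralGroup m := e xH with ha_def
  have hx2 : x ^ 2 = 1 := by
    have h := pow_orderOf_eq_one x
    rwa [hx] at h
  have hx1 : x ≠ 1 := by
    intro h
    rw [h, orderOf_one] at hx
    omega
  have ha2 : a ^ 2 = 1 := by
    have hxH2 : xH ^ 2 = 1 := Subtype.ext (by simpa using hx2)
    show e xH ^ 2 = 1
    rw [← _root_.map_pow, hxH2, _root_.map_one]
  have ha1 : a ≠ 1 := by
    intro h
    apply hx1
    have : xH = 1 := e.injective (by rw [← ha_def, h, _root_.map_one])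
    simpa [hxH_def] using congrArg Subtype.val this
  have hasq : ¬ IsSquare a := by
    rintro ⟨b, hb⟩
    apply hxS
    have hxx : xH = e.symm b * e.symm b := by
      apply e.injective
      rw [_root_.map_mul, MulEquiv.apply_symm_apply, ← hb, ha_def]
    have hx' : x = (↑(e.symm b) : ProjectiveGL2 F) ^ 2 := by
      have := congrArg Subtype.val hxx
      simpa [hxH_def, pow_two] using this
    rw [hx']
    exact sq_mem_socle F _
  obtain ⟨i, hi⟩ := dihedral_inv_sq m hm4 hm2 a ha2 ha1 hasq
  -- the centralizer of x in H
  set K : Subgroup H := Subgroup.centralizer {xH} with hK_def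
  have hmapK : K.map e.toMonoidHom = Subgroup.centralizer {a} := by
    ext g
    simp only [Subgroup.mem_map]
    constructor
    · rintro ⟨h, hh, rfl⟩
      rw [Subgroup.mem_centralizer_singleton_iff] at hh ⊢
      show e h * e xH = e xH * e h
      rw [← _root_.map_mul, hh, _root_.map_mul]
    · intro hg
      refine ⟨e.symm g, ?_, by simp⟩
      rw [Subgroup.mem_centralizer_singleton_iff]
      have hg' : g * a = a * g := Subgroup.mem_centralizer_singleton_iff.mp hg
      apply e.injective
      rw [_root_.map_mul, _root_.map_mul, MulEquiv.apply_symm_apply]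
      exact hg'
  have eqK : K ≃* (Subgroup.centralizer {a} : Subgroup (DihedralGroup m)) :=
    (MulEquiv.subgroupMap e K).trans (MulEquiv.subgroupCongr hmapK)
  have cardK : Nat.card K = 4 := by
    rw [Nat.card_congr eqK.toEquiv, hi]
    exact card_centralizer_sr hm2' hm2 i
  have expK : Monoid.exponent K = 2 := by
    rw [Monoid.exponent_eq_of_mulEquiv eqK, hi]
    exact exponent_centralizer_sr hm2' hm2 i
  -- the answer subgroup
  set V₀ : Subgroup (ProjectiveGL2 F) := K.map H.subtype with hV₀_def
  have eqV₀ : K ≃* V₀ := K.equivMapOfInjective H.subtype H.subtype_injective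
  have cardV₀ : Nat.card V₀ = 4 := by rw [← Nat.card_congr eqV₀.toEquiv]; exact cardK
  have expV₀ : Monoid.exponent V₀ = 2 := by
    rw [← Monoid.exponent_eq_of_mulEquiv eqV₀]; exact expK
  have hK4 : IsKleinFour V₀ := ⟨cardV₀, expV₀⟩
  have hxV₀ : x ∈ V₀ :=
    ⟨xH, Subgroup.mem_centralizer_singleton_iff.mpr rfl, rfl⟩
  have hV₀H : V₀ ≤ H := Subgroup.map_subtype_le K
  refine ⟨V₀, ⟨hV₀H, hK4, hxV₀⟩, ?_⟩
  rintro V ⟨hVH, hVK4, hxV⟩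
  haveI : Finite V₀ := Nat.finite_of_card_ne_zero (by rw [cardV₀]; norm_num)
  have hle : V ≤ V₀ := by
    intro v hv
    have hcomm : v * x = x * v := by
      have h2 : Monoid.exponent V = 2 := hVK4.exponent_two
      have := mul_comm_of_exponent_two h2 (⟨v, hv⟩ : V) (⟨x, hxV⟩ : V)
      simpa using congrArg Subtype.val this
    exact ⟨⟨v, hVH hv⟩,
      Subgroup.mem_centralizer_singleton_iff.mpr (Subtype.ext hcomm), rfl⟩
  exact Subgroup.eq_of_le_of_card_ge hle (by rw [cardV₀, hVK4.card_four])
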